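/- Let M be an n×n matrix over RatFunc ℂ all of whose entries have intDegree ≤ 0, let S(M) := (M - X • 1)⁻¹ + X • 1 be its spectral inverse, and let B₁ ⊇ B₂ ⊇ ... ⊇ B_m be a decreasing chain of subsets of Fin n with B_m nonempty. Then the sequential isospectral reduction R(S(M); B₁, ..., B_m) := R(... R(R(S(M);B₁); B₂) ...; B_m), where at each step the reduction is taken over the copy of the next index set inside the index subtype of the current reduced matrix, exists and equals the single reduction R(S(M); B_m), after identifying the iterated subtypes with the subtype of B_m via the canonical equivalences. -/

import Mathlib

set_option synthInstance.maxHeartbeats 1000000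
set_option maxHeartbeats 1000000

open Matrix

/-- The isospectral reduction of `M` over `B`, with interior index set `I = Bᶜ`:
`R(M;B) = M_BB - M_BI (M_II - X•1)⁻¹ M_IB`. -/
noncomputable def isoRed {α : Type} [Fintype α] [DecidableEq α]
    (M : Matrix α α (RatFunc ℂ)) (B : Finset α) : Matrix ↥B ↥B (RatFunc ℂ) :=
  M.submatrix (Subtype.val : ↥B → α) (Subtype.val : ↥B → α) -
    M.submatrix (Subtype.val : ↥B → α) (Subtype.val : ↥Bᶜ → α) *
      (M.submatrix (Subtype.val : ↥Bᶜ → α) (Subtype.val : ↥Bᶜ → α) -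
        (RatFunc.X : RatFunc ℂ) • 1)⁻¹ *
      M.submatrix (Subtype.val : ↥Bᶜ → α) (Subtype.val : ↥B → α)

/-- The spectral inverse of a square matrix over `RatFunc ℂ`:
`S(M) = (M - X•1)⁻¹ + X•1`. -/
noncomputable def specInv {α : Type} [Fintype α] [DecidableEq α]
    (M : Matrix α α (RatFunc ℂ)) : Matrix α α (RatFunc ℂ) :=
  (M - (RatFunc.X : RatFunc ℂ) • 1)⁻¹ + (RatFunc.X : RatFunc ℂ) • 1

/-- The canonical equivalence between the copy of `C` inside the subtype of `B`
(for `C ⊆ B`) and the subtype of `C`. -/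
def copyEquiv {α : Type} [Fintype α] [DecidableEq α] {B C : Finset α} (h : C ⊆ B) :
    ↥(Finset.univ.filter (fun x : ↥B => x.val ∈ C)) ≃ ↥C where
  toFun x := ⟨x.1.1, (Finset.mem_filter.mp x.2).2⟩
  invFun y := ⟨⟨y.1, h y.2⟩, Finset.mem_filter.mpr ⟨Finset.mem_univ _, y.2⟩⟩
  left_inv _ := Subtype.ext (Subtype.ext rfl)
  right_inv _ := rfl

/-- One step of a sequential reduction: reduce a matrix indexed by the subtype of `B`
over the copy of `C ⊆ B` inside that subtype, and identify the resulting index type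
with the subtype of `C` via the canonical equivalence. -/
noncomputable def redStep {α : Type} [Fintype α] [DecidableEq α] {B : Finset α}
    (A : Matrix ↥B ↥B (RatFunc ℂ)) (C : Finset α) (h : C ⊆ B) :
    Matrix ↥C ↥C (RatFunc ℂ) :=
  Matrix.reindex (copyEquiv h) (copyEquiv h)
    (isoRed A (Finset.univ.filter (fun x : ↥B => x.val ∈ C)))

/-- The sequential isospectral reduction `R(M; B₀, …, B_m)` of `M` over a decreasing
chain `B₀ ⊇ B₁ ⊇ ⋯ ⊇ B_m` of index sets. -/
noncomputable def seqRed {n : ℕ} (M : Matrix (Fin n) (Fin n) (RatFunc ℂ)) :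
    (m : ℕ) → (B : Fin (m + 1) → Finset (Fin n)) →
    (∀ k : Fin m, B k.succ ⊆ B k.castSucc) →
    Matrix ↥(B (Fin.last m)) ↥(B (Fin.last m)) (RatFunc ℂ)
  | 0, B, _ => isoRed M (B (Fin.last 0))
  | m + 1, B, h =>
      redStep
        (seqRed M m (fun k => B k.castSucc)
          (fun k => by
            have hk := h k.castSucc
            rwa [Fin.succ_castSucc] at hk))
        (B (Fin.last (m + 1)))
        (by
          have hl := h (Fin.last m)
          rwa [Fin.succ_last] at hl)

open scoped Classical in
/-- A matrix all of whose entries have nonpositive degree, shifted by `-X•1`, is invertible. -/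
lemma isUnit_sub_X_smul_one {α : Type} [Fintype α] [DecidableEq α]
    (M : Matrix α α (RatFunc ℂ)) (hdeg : ∀ i j, (M i j).intDegree ≤ 0) :
    IsUnit (M - (RatFunc.X : RatFunc ℂ) • 1) := by
  classical
  set v : Valuation (RatFunc ℂ) (WithZero (Multiplicative ℤ)) :=
    FunctionField.inftyValuation ℂ with hv
  set A : Matrix α α (RatFunc ℂ) := M - (RatFunc.X : RatFunc ℂ) • 1 with hA
  set n : ℕ := Fintype.card α with hn
  have hpow : ∀ k : ℕ, (Multiplicative.ofAdd (1 : ℤ)) ^ k = Multiplicative.ofAdd (k : ℤ) := by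
    intro k
    rw [← ofAdd_nsmul]
    norm_num
  have hvle : ∀ i j : α, v (M i j) ≤ ((Multiplicative.ofAdd (0 : ℤ) : Multiplicative ℤ) :
      WithZero (Multiplicative ℤ)) := by
    intro i j
    by_cases h : M i j = 0
    · rw [h, map_zero]; exact zero_le'
    · rw [hv, FunctionField.inftyValuation, FunctionField.inftyValuation_apply, FunctionField.inftyValuation_of_nonzero ℂ h]
      exact WithZero.coe_le_coe.mpr (Multiplicative.ofAdd_le.mpr (hdeg i j))
  have hvX : v (RatFunc.X : RatFunc ℂ) = ((Multiplicative.ofAdd (1 : ℤ) : Multiplicative ℤ) :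
      WithZero (Multiplicative ℤ)) := by
    rw [hv, FunctionField.inftyValuation, FunctionField.inftyValuation.X]; rfl
  have hdiag : ∀ i : α, v (A i i) = ((Multiplicative.ofAdd (1 : ℤ) : Multiplicative ℤ) :
      WithZero (Multiplicative ℤ)) := by
    intro i
    have h1 : A i i = M i i - RatFunc.X := by
      simp [hA, Matrix.sub_apply, Matrix.smul_apply, Matrix.one_apply_eq]
    rw [h1, Valuation.map_sub_eq_of_lt_right, hvX]
    rw [hvX]
    exact lt_of_le_of_lt (hvle i i) (WithZero.coe_lt_coe.mpr (by
      exact Multiplicative.ofAdd_lt.mpr zero_lt_one))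
  have hoff : ∀ i j : α, i ≠ j → v (A i j) ≤ (1 : WithZero (Multiplicative ℤ)) := by
    intro i j hij
    have h1 : A i j = M i j := by
      simp [hA, Matrix.sub_apply, Matrix.smul_apply, Matrix.one_apply_ne hij]
    rw [h1]
    simpa using hvle i j
  have hall : ∀ i j : α, v (A i j) ≤ ((Multiplicative.ofAdd (1 : ℤ) : Multiplicative ℤ) :
      WithZero (Multiplicative ℤ)) := by
    intro i j
    by_cases h : i = j
    · subst h; exact le_of_eq (hdiag i)
    · exact le_trans (hoff i j h) (WithZero.coe_le_coe.mpr
        (Multiplicative.ofAdd_le.mpr zero_le_one))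
  have hvsmul : ∀ (c : ℤˣ) (x : RatFunc ℂ), v (c • x) = v x := by
    intro c x
    rcases Int.units_eq_one_or c with h | h <;> subst h
    · simp
    · have : (-1 : ℤˣ) • x = -x := by simp [Units.smul_def]
      rw [this, Valuation.map_neg]
  have ht1 : v (Equiv.Perm.sign (1 : Equiv.Perm α) • ∏ i, A ((1 : Equiv.Perm α) i) i) =
      ((Multiplicative.ofAdd (n : ℤ) : Multiplicative ℤ) : WithZero (Multiplicative ℤ)) := by
    rw [hvsmul]
    rw [map_prod]
    have : ∀ i ∈ Finset.univ, v (A ((1 : Equiv.Perm α) i) i) =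
        ((Multiplicative.ofAdd (1 : ℤ) : Multiplicative ℤ) : WithZero (Multiplicative ℤ)) :=
      fun i _ => hdiag i
    rw [Finset.prod_congr rfl this, Finset.prod_const, Finset.card_univ, ← hn,
      ← WithZero.coe_pow, hpow]
  have hrest : ∀ σ ∈ Finset.univ.erase (1 : Equiv.Perm α),
      v (Equiv.Perm.sign σ • ∏ i, A (σ i) i) <
        ((Multiplicative.ofAdd (n : ℤ) : Multiplicative ℤ) : WithZero (Multiplicative ℤ)) := by
    intro σ hσ
    have hσ1 : σ ≠ 1 := (Finset.mem_erase.mp hσ).1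
    obtain ⟨i₀, hi₀⟩ : ∃ i, σ i ≠ i := by
      by_contra hc
      push_neg at hc
      exact hσ1 (Equiv.ext hc)
    have hnpos : 0 < n := by rw [hn]; exact Fintype.card_pos_iff.mpr ⟨i₀⟩
    rw [hvsmul, map_prod]
    calc ∏ i, v (A (σ i) i)
        = v (A (σ i₀) i₀) * ∏ i ∈ Finset.univ.erase i₀, v (A (σ i) i) :=
          (Finset.mul_prod_erase _ _ (Finset.mem_univ _)).symm
      _ ≤ 1 * ∏ i ∈ Finset.univ.erase i₀,
            ((Multiplicative.ofAdd (1 : ℤ) : Multiplicative ℤ) : WithZero (Multiplicative ℤ)) :=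
          mul_le_mul' (hoff _ _ hi₀) (Finset.prod_le_prod' fun i _ => hall _ _)
      _ = ((Multiplicative.ofAdd ((n - 1 : ℕ) : ℤ) : Multiplicative ℤ) :
            WithZero (Multiplicative ℤ)) := by
          rw [one_mul, Finset.prod_const, Finset.card_erase_of_mem (Finset.mem_univ _),
            Finset.card_univ, ← hn, ← WithZero.coe_pow, hpow]
      _ < _ := by
          rw [WithZero.coe_lt_coe, Multiplicative.ofAdd_lt]
          exact_mod_cast Nat.sub_lt hnpos one_pos
  have hdet : v A.det = ((Multiplicative.ofAdd (n : ℤ) : Multiplicative ℤ) :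
      WithZero (Multiplicative ℤ)) := by
    rw [Matrix.det_apply,
      ← Finset.add_sum_erase _ _ (Finset.mem_univ (1 : Equiv.Perm α))]
    rw [Valuation.map_add_eq_of_lt_left _ (lt_of_lt_of_le
      (Valuation.map_sum_lt _ (WithZero.coe_ne_zero) hrest) (le_of_eq ht1.symm))]
    exact ht1
  have hne : A.det ≠ 0 := by
    intro h
    rw [h, map_zero] at hdet
    exact WithZero.zero_ne_coe hdet
  exact (Matrix.isUnit_iff_isUnit_det _).mpr (isUnit_iff_ne_zero.mpr hne)

/-- The block decomposition equivalence for a finset `B`. -/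
def blockEquiv {α : Type} [Fintype α] [DecidableEq α] (B : Finset α) :
    ↥B ⊕ ↥(Bᶜ : Finset α) ≃ α :=
  (Equiv.sumCongr (Equiv.refl _)
    (Equiv.subtypeEquivRight (fun x => Finset.mem_compl))).trans
    (Equiv.sumCompl (· ∈ B))

@[simp] lemma blockEquiv_inl {α : Type} [Fintype α] [DecidableEq α] (B : Finset α) (x : ↥B) :
    blockEquiv B (Sum.inl x) = x.val := rfl

@[simp] lemma blockEquiv_inr {α : Type} [Fintype α] [DecidableEq α] (B : Finset α)
    (x : ↥(Bᶜ : Finset α)) : blockEquiv B (Sum.inr x) = x.val := rfl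

lemma submatrix_one_same {α : Type} [Fintype α] [DecidableEq α] (B : Finset α) :
    (1 : Matrix α α (RatFunc ℂ)).submatrix (Subtype.val : ↥B → α) (Subtype.val : ↥B → α) = 1 := by
  ext i j
  simp [Matrix.one_apply, Subtype.val_inj]

lemma submatrix_one_off₁ {α : Type} [Fintype α] [DecidableEq α] (B : Finset α) :
    (1 : Matrix α α (RatFunc ℂ)).submatrix (Subtype.val : ↥B → α)
      (Subtype.val : ↥(Bᶜ : Finset α) → α) = 0 := by
  ext i j
  have : (i : α) ≠ (j : α) := by
    intro h
    have := j.2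
    rw [Finset.mem_compl, ← h] at this
    exact this i.2
  simp [Matrix.one_apply_ne this]

lemma submatrix_one_off₂ {α : Type} [Fintype α] [DecidableEq α] (B : Finset α) :
    (1 : Matrix α α (RatFunc ℂ)).submatrix (Subtype.val : ↥(Bᶜ : Finset α) → α)
      (Subtype.val : ↥B → α) = 0 := by
  ext i j
  have : (i : α) ≠ (j : α) := by
    intro h
    have := i.2
    rw [Finset.mem_compl, h] at this
    exact this j.2
  simp [Matrix.one_apply_ne this]

/-- Central lemma: the isospectral reduction of the spectral inverse over `B`
is the spectral inverse of the corresponding principal submatrix, and the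
interior block is invertible. -/
lemma isoRed_specInv {α : Type} [Fintype α] [DecidableEq α]
    (M : Matrix α α (RatFunc ℂ)) (hdeg : ∀ i j, (M i j).intDegree ≤ 0) (B : Finset α) :
    IsUnit ((specInv M).submatrix (Subtype.val : ↥(Bᶜ : Finset α) → α)
        (Subtype.val : ↥(Bᶜ : Finset α) → α) - (RatFunc.X : RatFunc ℂ) • 1) ∧
    isoRed (specInv M) B =
      specInv (M.submatrix (Subtype.val : ↥B → α) (Subtype.val : ↥B → α)) := by
  classical
  set N : Matrix α α (RatFunc ℂ) := M - (RatFunc.X : RatFunc ℂ) • 1 with hNdef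
  have hN : IsUnit N := isUnit_sub_X_smul_one M hdeg
  set e := blockEquiv B with he
  set A := N.submatrix (Subtype.val : ↥B → α) (Subtype.val : ↥B → α) with hAdef
  set Bm := N.submatrix (Subtype.val : ↥B → α) (Subtype.val : ↥(Bᶜ : Finset α) → α) with hBmdef
  set C := N.submatrix (Subtype.val : ↥(Bᶜ : Finset α) → α) (Subtype.val : ↥B → α) with hCdef
  set D := N.submatrix (Subtype.val : ↥(Bᶜ : Finset α) → α)
    (Subtype.val : ↥(Bᶜ : Finset α) → α) with hDdef
  have hAeq : A = M.submatrix (Subtype.val : ↥B → α) (Subtype.val : ↥B → α) -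
      (RatFunc.X : RatFunc ℂ) • 1 := by
    rw [hAdef, hNdef]
    ext i j
    simp [Matrix.submatrix_apply, Matrix.sub_apply, Matrix.smul_apply, Matrix.one_apply,
      Subtype.val_inj]
  have hA : IsUnit A := by
    rw [hAeq]
    exact isUnit_sub_X_smul_one _ (fun i j => hdeg _ _)
  -- block picture
  have hN' : Matrix.reindex e.symm e.symm N = Matrix.fromBlocks A Bm C D := by
    ext (i | i) (j | j) <;> rfl
  letI iA : Invertible A := hA.nonempty_invertible.some
  letI iN' : Invertible (Matrix.reindex e.symm e.symm N) := by
    refine Matrix.invertibleOfIsUnitDet _ ?_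
    rw [Matrix.det_reindex_self]
    exact (Matrix.isUnit_iff_isUnit_det N).mp hN
  letI iFB : Invertible (Matrix.fromBlocks A Bm C D) := iN'.copy _ hN'.symm
  letI iS : Invertible (D - C * ⅟ A * Bm) := Matrix.invertibleOfFromBlocks₁₁Invertible A Bm C D
  set S : Matrix ↥(Bᶜ : Finset α) ↥(Bᶜ : Finset α) (RatFunc ℂ) := D - C * ⅟ A * Bm with hSdef
  have hbig : Matrix.reindex e.symm e.symm N⁻¹ =
      Matrix.fromBlocks (⅟ A + ⅟ A * Bm * ⅟ S * C * ⅟ A) (-(⅟ A * Bm * ⅟ S)) (-(⅟ S * C * ⅟ A)) (⅟ S) := by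
    rw [← Matrix.inv_reindex, hN', ← Matrix.invOf_eq_nonsing_inv]
    exact Matrix.invOf_fromBlocks₁₁_eq A Bm C D
  have hPbb : (N⁻¹).submatrix (Subtype.val : ↥B → α) (Subtype.val : ↥B → α) =
      ⅟ A + ⅟ A * Bm * ⅟ S * C * ⅟ A := by
    have h := congrArg Matrix.toBlocks₁₁ hbig
    rwa [Matrix.toBlocks_fromBlocks₁₁] at h
  have hPbi : (N⁻¹).submatrix (Subtype.val : ↥B → α) (Subtype.val : ↥(Bᶜ : Finset α) → α) =
      -(⅟ A * Bm * ⅟ S) := by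
    have h := congrArg Matrix.toBlocks₁₂ hbig
    rwa [Matrix.toBlocks_fromBlocks₁₂] at h
  have hPib : (N⁻¹).submatrix (Subtype.val : ↥(Bᶜ : Finset α) → α) (Subtype.val : ↥B → α) =
      -(⅟ S * C * ⅟ A) := by
    have h := congrArg Matrix.toBlocks₂₁ hbig
    rwa [Matrix.toBlocks_fromBlocks₂₁] at h
  have hPii : (N⁻¹).submatrix (Subtype.val : ↥(Bᶜ : Finset α) → α)
      (Subtype.val : ↥(Bᶜ : Finset α) → α) = ⅟ S := by
    have h := congrArg Matrix.toBlocks₂₂ hbig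
    rwa [Matrix.toBlocks_fromBlocks₂₂] at h
  -- submatrices of specInv M
  have hspec : specInv M = N⁻¹ + (RatFunc.X : RatFunc ℂ) • 1 := by
    rw [specInv, ← hNdef]
  have h₁ : (specInv M).submatrix (Subtype.val : ↥B → α) (Subtype.val : ↥B → α) =
      (N⁻¹).submatrix (Subtype.val : ↥B → α) (Subtype.val : ↥B → α) +
        (RatFunc.X : RatFunc ℂ) • 1 := by
    rw [hspec]
    ext i j
    simp [Matrix.submatrix_apply, Matrix.add_apply, Matrix.smul_apply, Matrix.one_apply,
      Subtype.val_inj]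
  have h₂ : (specInv M).submatrix (Subtype.val : ↥B → α)
      (Subtype.val : ↥(Bᶜ : Finset α) → α) =
      (N⁻¹).submatrix (Subtype.val : ↥B → α) (Subtype.val : ↥(Bᶜ : Finset α) → α) := by
    rw [hspec]
    have h0 := submatrix_one_off₁ B
    ext i j
    have := congrFun (congrFun h0 i) j
    simp only [Matrix.submatrix_apply, Matrix.zero_apply] at this
    simp [Matrix.submatrix_apply, Matrix.add_apply, Matrix.smul_apply, this]
  have h₃ : (specInv M).submatrix (Subtype.val : ↥(Bᶜ : Finset α) → α)
      (Subtype.val : ↥B → α) =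
      (N⁻¹).submatrix (Subtype.val : ↥(Bᶜ : Finset α) → α) (Subtype.val : ↥B → α) := by
    rw [hspec]
    have h0 := submatrix_one_off₂ B
    ext i j
    have := congrFun (congrFun h0 i) j
    simp only [Matrix.submatrix_apply, Matrix.zero_apply] at this
    simp [Matrix.submatrix_apply, Matrix.add_apply, Matrix.smul_apply, this]
  have hII : (specInv M).submatrix (Subtype.val : ↥(Bᶜ : Finset α) → α)
      (Subtype.val : ↥(Bᶜ : Finset α) → α) - (RatFunc.X : RatFunc ℂ) • 1 =
      (N⁻¹).submatrix (Subtype.val : ↥(Bᶜ : Finset α) → α)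
        (Subtype.val : ↥(Bᶜ : Finset α) → α) := by
    rw [hspec]
    ext i j
    simp [Matrix.submatrix_apply, Matrix.sub_apply, Matrix.add_apply, Matrix.smul_apply,
      Matrix.one_apply, Subtype.val_inj]
  constructor
  · rw [hII, hPii]
    exact isUnit_of_invertible _
  · have hPiiInv : ((N⁻¹).submatrix (Subtype.val : ↥(Bᶜ : Finset α) → α)
        (Subtype.val : ↥(Bᶜ : Finset α) → α))⁻¹ = S := by
      rw [hPii, Matrix.invOf_eq_nonsing_inv, Matrix.nonsing_inv_nonsing_inv]
      exact (Matrix.isUnit_iff_isUnit_det S).mp (isUnit_of_invertible S)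
    rw [isoRed, hII, hPiiInv, h₁, h₂, h₃, hPbb, hPbi, hPib]
    have hRHS : specInv (M.submatrix (Subtype.val : ↥B → α) (Subtype.val : ↥B → α)) =
        ⅟ A + (RatFunc.X : RatFunc ℂ) • 1 := by
      rw [specInv, ← hAeq, ← Matrix.invOf_eq_nonsing_inv]
    rw [hRHS]
    have hmid : -(⅟ A * Bm * ⅟ S) * S = -(⅟ A * Bm) := by
      rw [Matrix.neg_mul, Matrix.mul_assoc, invOf_mul_self, Matrix.mul_one]
    rw [hmid, Matrix.neg_mul, Matrix.mul_neg, neg_neg]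
    simp only [Matrix.mul_assoc]
    abel

lemma specInv_reindex {α β : Type} [Fintype α] [DecidableEq α] [Fintype β] [DecidableEq β]
    (e : α ≃ β) (Q : Matrix α α (RatFunc ℂ)) :
    Matrix.reindex e e (specInv Q) = specInv (Matrix.reindex e e Q) := by
  rw [specInv, specInv]
  have h1 : Matrix.reindex e e (Q - (RatFunc.X : RatFunc ℂ) • 1) =
      Matrix.reindex e e Q - (RatFunc.X : RatFunc ℂ) • 1 := by
    ext i j
    simp [Matrix.reindex_apply, Matrix.submatrix_apply, Matrix.sub_apply, Matrix.smul_apply,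
      Matrix.one_apply, Equiv.symm_apply_eq]
  have h2 : Matrix.reindex e e ((Q - (RatFunc.X : RatFunc ℂ) • 1)⁻¹ +
      (RatFunc.X : RatFunc ℂ) • 1) =
      Matrix.reindex e e ((Q - (RatFunc.X : RatFunc ℂ) • 1)⁻¹) +
        (RatFunc.X : RatFunc ℂ) • 1 := by
    ext i j
    simp [Matrix.reindex_apply, Matrix.submatrix_apply, Matrix.add_apply, Matrix.smul_apply,
      Matrix.one_apply]
  rw [h2, ← Matrix.inv_reindex, h1]

lemma reindex_copyEquiv_submatrix {α : Type} [Fintype α] [DecidableEq α]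
    {B C : Finset α} (h : C ⊆ B) (M : Matrix α α (RatFunc ℂ)) :
    Matrix.reindex (copyEquiv h) (copyEquiv h)
      ((M.submatrix (Subtype.val : ↥B → α) (Subtype.val : ↥B → α)).submatrix
        (Subtype.val : ↥(Finset.univ.filter (fun x : ↥B => x.val ∈ C)) → ↥B)
        (Subtype.val : ↥(Finset.univ.filter (fun x : ↥B => x.val ∈ C)) → ↥B)) =
      M.submatrix (Subtype.val : ↥C → α) (Subtype.val : ↥C → α) := by
  ext i j
  rfl

lemma seqRed_eq {n : ℕ} (M : Matrix (Fin n) (Fin n) (RatFunc ℂ))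
    (hdeg : ∀ i j, (M i j).intDegree ≤ 0) :
    ∀ (m : ℕ) (B : Fin (m + 1) → Finset (Fin n))
      (hchain : ∀ k : Fin m, B k.succ ⊆ B k.castSucc),
      seqRed (specInv M) m B hchain =
        specInv (M.submatrix (Subtype.val : ↥(B (Fin.last m)) → Fin n)
          (Subtype.val : ↥(B (Fin.last m)) → Fin n)) := by
  intro m
  induction m with
  | zero =>
      intro B hchain
      show isoRed (specInv M) (B (Fin.last 0)) = _
      exact (isoRed_specInv M hdeg (B (Fin.last 0))).2
  | succ m ih =>
      intro B hchain
      show redStep _ (B (Fin.last (m + 1))) _ = _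
      rw [redStep]
      rw [ih (fun k => B k.castSucc) _]
      set D := B ((Fin.last m).castSucc) with hD
      set C := B (Fin.last (m + 1)) with hC
      have hsub : C ⊆ D := by
        have hl := hchain (Fin.last m)
        rwa [Fin.succ_last] at hl
      have hdegD : ∀ (i j : ↥D),
          ((M.submatrix (Subtype.val : ↥D → Fin n) (Subtype.val : ↥D → Fin n)) i j).intDegree
            ≤ 0 := fun i j => hdeg _ _
      rw [(isoRed_specInv _ hdegD _).2, specInv_reindex, reindex_copyEquiv_submatrix]

theorem seqRed_specInv_exists_and_eq_isoRed_last {n : ℕ}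
    (M : Matrix (Fin n) (Fin n) (RatFunc ℂ))
    (hdeg : ∀ i j, (M i j).intDegree ≤ 0)
    (m : ℕ) (B : Fin (m + 1) → Finset (Fin n))
    (hchain : ∀ k : Fin m, B k.succ ⊆ B k.castSucc)
    (hlast : (B (Fin.last m)).Nonempty) :
    IsUnit ((specInv M).submatrix
        (Subtype.val : ↥(B (Fin.last m))ᶜ → Fin n) (Subtype.val : ↥(B (Fin.last m))ᶜ → Fin n) -
      (RatFunc.X : RatFunc ℂ) • 1) ∧
    seqRed (specInv M) m B hchain = isoRed (specInv M) (B (Fin.last m)) := by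
  constructor
  · exact (isoRed_specInv M hdeg (B (Fin.last m))).1
  · rw [seqRed_eq M hdeg m B hchain, (isoRed_specInv M hdeg (B (Fin.last m))).2]
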